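/- arXiv:1209.6534 — 2 statements merged into one kernel-verified Lean document; each statement's English description precedes it below -/
import Mathlib

section
/- Let Y = s + σ Pε ∈ ℝⁿ with ε having independent centered unit-variance components, and let π be an orthogonal projection onto a subspace V. Define σ̂² = n‖Y − πY‖ₙ² / Tr(Pᵀ(Iₙ−π)P). Then E[σ̂²] = σ² + n‖s − πs‖ₙ² / Tr(Pᵀ(Iₙ−π)P). -/
open MeasureTheory ProbabilityTheory Matrix

/-- Lemma 3 (`G_UV_lem_bias`): the residual least-squares variance estimator
`σ̂² = n‖Y − πY‖ₙ² / Tr(Pᵀ(I−π)P)` with `Y = s + σPε` satisfies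
`E[σ̂²] = σ² + n‖s − πs‖ₙ² / Tr(Pᵀ(I−π)P)`. -/
theorem variance_estimator_mean {Ω : Type*} [MeasureSpace Ω]
    [IsProbabilityMeasure (ℙ : Measure Ω)]
    (n : ℕ) (hn : 0 < n) (s : Fin n → ℝ) (σ : ℝ)
    (P π : Matrix (Fin n) (Fin n) ℝ)
    (hπsym : π.IsSymm) (hπidem : π * π = π)
    (htr : 0 < (Pᵀ * (1 - π) * P).trace)
    (ε : Ω → Fin n → ℝ)
    (hmeas : ∀ i, Measurable fun ω => ε ω i)
    (hindep : iIndepFun (fun i ω => ε ω i) ℙ)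
    (hL2 : ∀ i, MemLp (fun ω => ε ω i) 2 ℙ)
    (hmean : ∀ i, (∫ ω, ε ω i) = 0)
    (hvar : ∀ i, (∫ ω, (ε ω i) ^ 2) = 1) :
    (∫ ω, ((n : ℝ) * ((n : ℝ)⁻¹ * ∑ i,
        ((fun j => s j + σ * P.mulVec (ε ω) j) i
          - π.mulVec (fun j => s j + σ * P.mulVec (ε ω) j) i) ^ 2))
        / (Pᵀ * (1 - π) * P).trace)
      = σ ^ 2 + ((n : ℝ) * ((n : ℝ)⁻¹ * ∑ i, (s i - π.mulVec s i) ^ 2))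
          / (Pᵀ * (1 - π) * P).trace := by
  have hn' : ((n : ℝ)) ≠ 0 := Nat.cast_ne_zero.mpr hn.ne'
  set T := (Pᵀ * (1 - π) * P).trace with hTdef
  have hT0 : T ≠ 0 := htr.ne'
  set A := (1 - π) * P with hAdef
  set a : Fin n → ℝ := fun i => s i - π.mulVec s i with hadef
  -- integrability facts
  have hε_int : ∀ j, Integrable (fun ω => ε ω j) ℙ := fun j => (hL2 j).integrable one_le_two
  have hεε_int : ∀ j k, Integrable (fun ω => ε ω j * ε ω k) ℙ := by
    intro j k
    have h1 := ((hL2 j).add (hL2 k)).integrable_sq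
    have h2 := (hL2 j).integrable_sq
    have h3 := (hL2 k).integrable_sq
    have h4 := (((h1.sub h2).sub h3).div_const 2)
    have : (fun ω => ε ω j * ε ω k)
        = fun ω => (((ε ω j + ε ω k) ^ 2 - ε ω j ^ 2) - ε ω k ^ 2) / 2 := by
      funext ω; ring
    rw [this]; exact h4
  have hεε : ∀ j k, (∫ ω, ε ω j * ε ω k) = if j = k then 1 else 0 := by
    intro j k
    by_cases h : j = k
    · subst h
      simp only [if_true]
      have : (fun ω => ε ω j * ε ω j) = fun ω => ε ω j ^ 2 := by funext ω; ring
      rw [this]; exact hvar j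
    · simp only [h, if_false]
      have hind : IndepFun (fun ω => ε ω j) (fun ω => ε ω k) ℙ := hindep.indepFun h
      have h5 : (∫ ω, ε ω j * ε ω k) = (∫ ω, ε ω j) * ∫ ω, ε ω k :=
        hind.integral_fun_mul_eq_mul_integral (hε_int j).1 (hε_int k).1
      rw [h5, hmean j, zero_mul]
  -- key computation
  have key : ∀ (b : ℝ) (c : Fin n → ℝ),
      (∫ ω, (b + ∑ j, c j * ε ω j) ^ 2) = b ^ 2 + ∑ j, (c j) ^ 2 := by
    intro b c
    have hexp : (fun ω => (b + ∑ j, c j * ε ω j) ^ 2)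
        = fun ω => (b ^ 2 + ∑ j, (2 * b * c j) * ε ω j)
            + ∑ j, ∑ k, (c j * c k) * (ε ω j * ε ω k) := by
      funext ω
      have h1 : (∑ j, c j * ε ω j) ^ 2
          = ∑ j, ∑ k, (c j * c k) * (ε ω j * ε ω k) := by
        rw [sq, Finset.sum_mul_sum]
        exact Finset.sum_congr rfl fun j _ => Finset.sum_congr rfl fun k _ => by ring
      rw [add_sq, h1]
      congr 1
      congr 1
      rw [Finset.mul_sum]
      exact Finset.sum_congr rfl fun j _ => by ring
    rw [hexp]
    have hi1 : Integrable (fun ω => b ^ 2 + ∑ j, (2 * b * c j) * ε ω j) ℙ := by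
      exact (integrable_const _).add
        (integrable_finset_sum _ fun j _ => (hε_int j).const_mul _)
    have hi2 : Integrable (fun ω => ∑ j, ∑ k, (c j * c k) * (ε ω j * ε ω k)) ℙ :=
      integrable_finset_sum _ fun j _ =>
        integrable_finset_sum _ fun k _ => (hεε_int j k).const_mul _
    rw [integral_add hi1 hi2]
    have e1 : (∫ ω, (b ^ 2 + ∑ j, (2 * b * c j) * ε ω j)) = b ^ 2 := by
      rw [integral_add (integrable_const _)
        (integrable_finset_sum _ fun j _ => (hε_int j).const_mul _),
        integral_const, integral_finset_sum _ fun j _ => (hε_int j).const_mul _]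
      simp only [integral_const_mul, hmean, mul_zero, Finset.sum_const_zero, add_zero, measure_univ, ENNReal.toReal_one, probReal_univ, one_smul]
    have e2 : (∫ ω, ∑ j, ∑ k, (c j * c k) * (ε ω j * ε ω k)) = ∑ j, (c j) ^ 2 := by
      rw [integral_finset_sum _ fun j _ =>
        integrable_finset_sum _ fun k _ => (hεε_int j k).const_mul _]
      refine Finset.sum_congr rfl fun j _ => ?_
      rw [integral_finset_sum _ fun k _ => (hεε_int j k).const_mul _]
      rw [Finset.sum_eq_single j]
      · rw [integral_const_mul, hεε j j]; simp [sq]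
      · intro k _ hk
        rw [integral_const_mul, hεε j k]
        simp [Ne.symm hk]
      · intro h; exact absurd (Finset.mem_univ j) h
    rw [e1, e2]
  -- rewrite the integrand
  have hintegrand : ∀ ω, ((n : ℝ) * ((n : ℝ)⁻¹ * ∑ i,
        ((fun j => s j + σ * P.mulVec (ε ω) j) i
          - π.mulVec (fun j => s j + σ * P.mulVec (ε ω) j) i) ^ 2)) / T
      = (∑ i, (a i + ∑ j, (σ * A i j) * ε ω j) ^ 2) / T := by
    intro ω
    rw [← mul_assoc, mul_inv_cancel₀ hn', one_mul]
    congr 1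
    refine Finset.sum_congr rfl fun i _ => ?_
    have hmv : (fun j => s j + σ * P.mulVec (ε ω) j) = s + σ • P.mulVec (ε ω) := by
      funext j; simp [Pi.add_apply, Pi.smul_apply, smul_eq_mul]
    have h1 : π.mulVec (fun j => s j + σ * P.mulVec (ε ω) j) i
        = π.mulVec s i + σ * π.mulVec (P.mulVec (ε ω)) i := by
      rw [hmv, Matrix.mulVec_add, Matrix.mulVec_smul]
      simp [smul_eq_mul]
    have h2 : (∑ j, (σ * A i j) * ε ω j) = σ * A.mulVec (ε ω) i := by
      rw [Matrix.mulVec, dotProduct, Finset.mul_sum]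
      exact Finset.sum_congr rfl fun j _ => by ring
    have h3 : A.mulVec (ε ω) i = P.mulVec (ε ω) i - π.mulVec (P.mulVec (ε ω)) i := by
      rw [hAdef, ← Matrix.mulVec_mulVec, Matrix.sub_mulVec, Matrix.one_mulVec]
      simp
    rw [h1, h2, h3, hadef]
    ring
  simp only [hintegrand]
  rw [integral_div]
  rw [integral_finset_sum _ (fun i _ => ?_)]
  swap
  · -- integrability of each square
    have : MemLp (fun ω => a i + ∑ j, (σ * A i j) * ε ω j) 2 ℙ := by
      refine (memLp_const (a i)).add ?_
      exact memLp_finset_sum _ fun j _ => ((hL2 j).const_mul _)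
    exact this.integrable_sq
  have hsum : (∑ i, ∫ ω, (a i + ∑ j, (σ * A i j) * ε ω j) ^ 2)
      = (∑ i, (a i) ^ 2) + σ ^ 2 * T := by
    have : ∀ i, (∫ ω, (a i + ∑ j, (σ * A i j) * ε ω j) ^ 2)
        = (a i) ^ 2 + σ ^ 2 * ∑ j, (A i j) ^ 2 := by
      intro i
      rw [key (a i) (fun j => σ * A i j)]
      congr 1
      rw [Finset.mul_sum]
      exact Finset.sum_congr rfl fun j _ => by ring
    rw [Finset.sum_congr rfl fun i _ => this i, Finset.sum_add_distrib, ← Finset.mul_sum]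
    congr 1
    -- ∑ i ∑ j (A i j)^2 = T
    have hAA : Aᵀ * A = Pᵀ * (1 - π) * P := by
      have hπT : (1 - π)ᵀ = 1 - π := by
        rw [Matrix.transpose_sub, Matrix.transpose_one, hπsym]
      have hidem2 : (1 - π) * (1 - π) = 1 - π := by
        rw [mul_sub, mul_one, sub_mul, one_mul, hπidem]
        simp
      rw [hAdef, Matrix.transpose_mul, hπT]
      rw [Matrix.mul_assoc, ← Matrix.mul_assoc (1 - π), hidem2, ← Matrix.mul_assoc]
    have : T = ∑ i, ∑ j, (A i j) ^ 2 := by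
      rw [hTdef, ← hAA, Matrix.trace]
      simp only [Matrix.diag, Matrix.mul_apply, Matrix.transpose_apply, sq]
      rw [Finset.sum_comm]
    rw [this]
  rw [hsum, add_div, mul_div_assoc, div_self hT0, mul_one, add_comm]
  congr 2
  rw [← mul_assoc, mul_inv_cancel₀ hn', one_mul]
end

section
/- Let P be an n×n matrix and ε a standard Gaussian vector in ℝⁿ. Then E[‖Pε‖ₙ⁴]^{1/2} ≤ (Tr(PᵀP) + ρ²(P))/n. -/
open MeasureTheory ProbabilityTheory Matrix

/-- The spectral norm of a real `n×n` matrix. -/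
noncomputable def specNorm {n : ℕ} (A : Matrix (Fin n) (Fin n) ℝ) : ℝ :=
  ‖Matrix.toEuclideanCLM (𝕜 := ℝ) A‖

open Real
open scoped ENNReal NNReal

lemma integral_Ioi_pow_exp (k : ℕ) :
    ∫ x in Set.Ioi (0:ℝ), x ^ k * Real.exp (-x^2/2)
      = (2:ℝ) ^ (((k:ℝ)+1)/2) * (1/2) * Real.Gamma (((k:ℝ)+1)/2) := by
  have h := integral_rpow_mul_exp_neg_mul_rpow (p := 2) (q := (k:ℝ)) (b := 1/2)
    two_pos (lt_of_lt_of_le (by norm_num) (Nat.cast_nonneg k)) (by norm_num)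
  have hb : ((1/2:ℝ)) ^ (-((k:ℝ)+1)/2 : ℝ) = (2:ℝ) ^ (((k:ℝ)+1)/2) := by
    rw [show ((1/2:ℝ)) = 2⁻¹ by norm_num, Real.inv_rpow (by norm_num),
      ← Real.rpow_neg (by norm_num), neg_div, neg_neg]
  rw [hb] at h
  rw [← h]
  refine setIntegral_congr_fun measurableSet_Ioi (fun x hx => ?_)
  rw [Real.rpow_natCast, Real.rpow_two]
  ring_nf

lemma J2 : ∫ x in Set.Ioi (0:ℝ), x ^ 2 * Real.exp (-x^2/2) = Real.sqrt (2*π) / 2 := by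
  rw [integral_Ioi_pow_exp 2]
  have hg : Real.Gamma ((((2:ℕ):ℝ)+1)/2) = (1/2) * Real.sqrt π := by
    rw [show ((((2:ℕ):ℝ)+1)/2) = 1/2 + 1 by norm_num, Real.Gamma_add_one (by norm_num),
      Real.Gamma_one_half_eq]
  have hp : (2:ℝ) ^ ((((2:ℕ):ℝ)+1)/2) = 2 * Real.sqrt 2 := by
    rw [show ((((2:ℕ):ℝ)+1)/2) = 1 + 1/2 by norm_num, Real.rpow_add two_pos, Real.rpow_one,
      ← Real.sqrt_eq_rpow]
  rw [hg, hp, Real.sqrt_mul (by norm_num)]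
  ring

lemma J4 : ∫ x in Set.Ioi (0:ℝ), x ^ 4 * Real.exp (-x^2/2) = 3 * Real.sqrt (2*π) / 2 := by
  rw [integral_Ioi_pow_exp 4]
  have hg : Real.Gamma ((((4:ℕ):ℝ)+1)/2) = (3/2) * ((1/2) * Real.sqrt π) := by
    rw [show ((((4:ℕ):ℝ)+1)/2) = (1/2 + 1) + 1 by norm_num, Real.Gamma_add_one (by norm_num),
      Real.Gamma_add_one (by norm_num), Real.Gamma_one_half_eq]
    ring
  have hp : (2:ℝ) ^ ((((4:ℕ):ℝ)+1)/2) = 4 * Real.sqrt 2 := by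
    rw [show ((((4:ℕ):ℝ)+1)/2) = 2 + 1/2 by norm_num, Real.rpow_add two_pos,
      ← Real.sqrt_eq_rpow, show (2:ℝ)^(2:ℝ) = 4 by
        rw [show (2:ℝ) = ((2:ℕ):ℝ) by norm_num, Real.rpow_natCast]; norm_num]
  rw [hg, hp, Real.sqrt_mul (by norm_num)]
  ring

lemma gaussianPDFReal_std (x : ℝ) :
    gaussianPDFReal 0 1 x = (Real.sqrt (2*π))⁻¹ * Real.exp (-x^2/2) := by
  unfold gaussianPDFReal
  norm_num

lemma integral_gauss_eq (g : ℝ → ℝ) :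
    ∫ x, g x ∂(gaussianReal 0 1)
      = ∫ x, (Real.sqrt (2*π))⁻¹ * Real.exp (-x^2/2) * g x := by
  rw [gaussianReal_of_var_ne_zero 0 one_ne_zero]
  have hd : (gaussianPDF 0 1) = fun x => ((gaussianPDFReal 0 1 x).toNNReal : ℝ≥0∞) := by
    funext x; rw [gaussianPDF_def]; rfl
  rw [hd, integral_withDensity_eq_integral_smul
    (measurable_gaussianPDFReal 0 1).real_toNNReal g]
  congr 1; funext x
  rw [NNReal.smul_def, Real.coe_toNNReal _ (gaussianPDFReal_nonneg 0 1 x),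
    gaussianPDFReal_std, smul_eq_mul]

lemma pow_le_fact_mul_exp {x : ℝ} (hx : 0 ≤ x) (k : ℕ) :
    x ^ k ≤ k.factorial * Real.exp x := by
  have h1 : x ^ k / k.factorial ≤ Real.exp x := by
    calc x ^ k / k.factorial ≤ ∑ i ∈ Finset.range (k+1), x ^ i / i.factorial := by
          refine Finset.single_le_sum (f := fun i => x ^ i / i.factorial) ?_ (Finset.self_mem_range_succ k)
          intro i _; positivity
      _ ≤ Real.exp x := Real.sum_le_exp_of_nonneg hx _
  have hk : (0:ℝ) < k.factorial := by exact_mod_cast k.factorial_pos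
  calc x ^ k = k.factorial * (x ^ k / k.factorial) := by field_simp
    _ ≤ k.factorial * Real.exp x := by
        exact mul_le_mul_of_nonneg_left h1 (le_of_lt hk)

lemma integrable_pow_mul_exp (k : ℕ) :
    Integrable (fun x : ℝ => x ^ k * Real.exp (-x^2/2)) := by
  have hint : Integrable (fun x : ℝ => (k.factorial * Real.exp 1) * Real.exp (-(1/4) * x ^ 2)) :=
    (integrable_exp_neg_mul_sq (by norm_num : (0:ℝ) < 1/4)).const_mul _
  refine hint.mono ?_ ?_
  · exact ((continuous_pow k).mul (by continuity)).aestronglyMeasurable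
  · refine Filter.Eventually.of_forall fun x => ?_
    have h1 : |x| ≤ x^2/4 + 1 := by nlinarith [sq_nonneg (|x|/2 - 1), sq_abs x]
    have h2 : |x ^ k * Real.exp (-x^2/2)| = |x|^k * Real.exp (-x^2/2) := by
      rw [abs_mul, abs_pow, abs_of_pos (Real.exp_pos _)]
    rw [Real.norm_eq_abs, Real.norm_eq_abs, h2]
    have h3 : |x|^k ≤ k.factorial * Real.exp |x| := pow_le_fact_mul_exp (abs_nonneg x) k
    have h4 : |x|^k * Real.exp (-x^2/2) ≤ (k.factorial * Real.exp |x|) * Real.exp (-x^2/2) :=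
      mul_le_mul_of_nonneg_right h3 (le_of_lt (Real.exp_pos _))
    refine h4.trans ?_
    rw [abs_of_pos (by positivity : (0:ℝ) < (k.factorial : ℝ) * Real.exp 1 * Real.exp (-(1/4) * x^2))]
    rw [mul_assoc, ← Real.exp_add, mul_assoc, ← Real.exp_add]
    refine mul_le_mul_of_nonneg_left ?_ (by positivity)
    exact Real.exp_le_exp.2 (by nlinarith)

lemma integrable_pow_gauss (k : ℕ) :
    Integrable (fun x => x ^ k) (gaussianReal 0 1) := by
  rw [gaussianReal_of_var_ne_zero 0 one_ne_zero]
  have hd : (gaussianPDF 0 1) = fun x => ENNReal.ofReal (gaussianPDFReal 0 1 x) := by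
    funext x; rw [gaussianPDF_def]
  rw [hd, integrable_withDensity_iff ((measurable_gaussianPDFReal 0 1).ennreal_ofReal)
    (Filter.Eventually.of_forall fun x => ENNReal.ofReal_lt_top)]
  have he : (fun x : ℝ => x ^ k * (ENNReal.ofReal (gaussianPDFReal 0 1 x)).toReal)
      = fun x => (Real.sqrt (2*π))⁻¹ * (x ^ k * Real.exp (-x^2/2)) := by
    funext x
    rw [ENNReal.toReal_ofReal (gaussianPDFReal_nonneg 0 1 x), gaussianPDFReal_std]
    ring
  rw [he]
  exact (integrable_pow_mul_exp k).const_mul _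

lemma sqrt_two_pi_pos : (0:ℝ) < Real.sqrt (2*π) :=
  Real.sqrt_pos.2 (by positivity)

lemma integral_pow_gauss_odd {k : ℕ} (hk : Odd k) :
    ∫ x, x ^ k ∂(gaussianReal 0 1) = 0 := by
  rw [integral_gauss_eq]
  set f : ℝ → ℝ := fun x => (Real.sqrt (2*π))⁻¹ * Real.exp (-x^2/2) * x ^ k with hf
  have h1 : ∫ x, f (-x) = ∫ x, f x := integral_neg_eq_self f volume
  have h2 : ∀ x, f (-x) = - f x := by
    intro x
    simp only [hf, neg_sq, hk.neg_pow]
    ring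
  simp_rw [h2, integral_neg] at h1
  linarith

lemma integral_pow_gauss_even {k : ℕ} (hk : Even k) (J : ℝ)
    (hJ : ∫ x in Set.Ioi (0:ℝ), x ^ k * Real.exp (-x^2/2) = J) :
    ∫ x, x ^ k ∂(gaussianReal 0 1) = (Real.sqrt (2*π))⁻¹ * (2 * J) := by
  rw [integral_gauss_eq]
  have h2 : (fun x : ℝ => (Real.sqrt (2*π))⁻¹ * Real.exp (-x^2/2) * x ^ k)
      = fun x => (Real.sqrt (2*π))⁻¹ * ((fun t : ℝ => t ^ k * Real.exp (-t^2/2)) |x|) := by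
    funext x
    simp only [hk.pow_abs, sq_abs]
    ring
  rw [h2, integral_const_mul]
  congr 1
  have h3 := integral_comp_abs (f := fun t : ℝ => t ^ k * Real.exp (-t^2/2))
  simpa [hJ] using h3

lemma gauss_moment_two : ∫ x, x ^ 2 ∂(gaussianReal 0 1) = 1 := by
  rw [integral_pow_gauss_even ⟨1, rfl⟩ _ J2]
  field_simp

lemma gauss_moment_four : ∫ x, x ^ 4 ∂(gaussianReal 0 1) = 3 := by
  rw [integral_pow_gauss_even ⟨2, rfl⟩ _ J4]
  have := sqrt_two_pi_pos
  field_simp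

lemma gauss_moment : ∀ k ≤ 4, ∫ x, x ^ k ∂(gaussianReal 0 1) =
    if k = 0 then 1 else if k = 2 then 1 else if k = 4 then 3 else 0 := by
  intro k hk
  interval_cases k
  · simp
  · simpa using integral_pow_gauss_odd (k := 1) ⟨0, rfl⟩
  · simpa using gauss_moment_two
  · simpa using integral_pow_gauss_odd (k := 3) ⟨1, rfl⟩
  · simpa using gauss_moment_four

lemma indep_integral_prod {Ω : Type*} [MeasureSpace Ω] [IsProbabilityMeasure (ℙ : Measure Ω)]
    {ι : Type*} {g : ι → Ω → ℝ}
    (hindep : iIndepFun g ℙ)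
    (hm : ∀ i, Measurable (g i)) (hint : ∀ i, Integrable (g i) ℙ) (s : Finset ι) :
    Integrable (∏ i ∈ s, g i) ℙ ∧
      ∫ ω, (∏ i ∈ s, g i) ω = ∏ i ∈ s, ∫ ω, g i ω := by
  classical
  induction s using Finset.cons_induction with
  | empty =>
    refine ⟨?_, by simp⟩
    exact integrable_const (1:ℝ)
  | cons a s ha ih =>
    have hIF : IndepFun (∏ j ∈ s, g j) (g a) ℙ :=
      hindep.indepFun_finsetProd_of_notMem hm ha
    have h1 : Integrable ((∏ j ∈ s, g j) * g a) ℙ :=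
      hIF.integrable_mul ih.1 (hint a)
    have h2 := hIF.integral_mul_eq_mul_integral ih.1.aestronglyMeasurable (hint a).aestronglyMeasurable
    constructor
    · rw [Finset.prod_cons, mul_comm]; exact h1
    · rw [Finset.prod_cons (f := fun i => ∫ ω, g i ω), ← ih.2]
      have h3 : ∫ (ω : Ω), (∏ i ∈ Finset.cons a s ha, g i) ω
          = ∫ (ω : Ω), ((∏ j ∈ s, g j) * g a) ω := by
        congr 1
        rw [Finset.prod_cons, mul_comm]
      rw [h3]
      rw [show (∫ (ω : Ω), ((∏ j ∈ s, g j) * g a) ω) = integral ℙ ((∏ j ∈ s, g j) * g a) from rfl,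
        h2, mul_comm]

noncomputable def muF (k : ℕ) : ℝ :=
  if k = 0 then 1 else if k = 2 then 1 else if k = 4 then 3 else 0

def multF {n : ℕ} (a b c d i : Fin n) : ℕ :=
  (if i = a then 1 else 0) + (if i = b then 1 else 0)
    + (if i = c then 1 else 0) + (if i = d then 1 else 0)

lemma muF_odd {k : ℕ} (hk : Odd k) : muF k = 0 := by
  have h0 : k ≠ 0 := by rintro rfl; exact (by decide : ¬ Odd 0) hk
  have h2 : k ≠ 2 := by rintro rfl; exact (by decide : ¬ Odd 2) hk
  have h4 : k ≠ 4 := by rintro rfl; exact (by decide : ¬ Odd 4) hk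
  simp [muF, h0, h2, h4]

lemma wick_prod {n : ℕ} (a b c d : Fin n) :
    ∏ i, muF (multF a b c d i)
      = (if a = b then (1:ℝ) else 0) * (if c = d then 1 else 0)
        + (if a = c then 1 else 0) * (if b = d then 1 else 0)
        + (if a = d then 1 else 0) * (if b = c then 1 else 0) := by
  by_cases hab : a = b <;> by_cases hcd : c = d
  · subst hab; subst hcd
    by_cases hac : a = c
    · subst hac
      rw [Finset.prod_eq_single a (fun i _ hi => by simp [multF, hi, muF]) (by simp)]
      simp [multF, muF]
      norm_num
    · have hone : ∀ i ∈ Finset.univ, muF (multF a a c c i) = 1 := by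
        intro i _
        by_cases hia : i = a
        · subst hia; simp [multF, hac, muF]
        · by_cases hic : i = c
          · subst hic; simp [multF, hia, muF]
          · simp [multF, hia, hic, muF]
      rw [Finset.prod_eq_one hone]
      have h1 : ¬ (a = c) := hac
      have h2 : ¬ (c = a) := fun h => hac h.symm
      simp [h1, h2]
  · subst hab
    have hodd : Odd (multF a a c d c) := by
      unfold multF
      by_cases hca : c = a
      · have had : ¬ (a = d) := fun h => hcd (hca.trans h)
        simp [hca, hcd, had, parity_simps]
        decide
      · simp [hca, hcd, parity_simps]
    have hrhs1 : ¬(a = c ∧ a = d) := by rintro ⟨rfl, rfl⟩; exact hcd rfl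
    rw [Finset.prod_eq_zero (Finset.mem_univ c) (muF_odd hodd)]
    by_cases hac : a = c <;> by_cases had : a = d <;> simp_all
  · subst hcd
    have hodd : Odd (multF a b c c a) := by
      unfold multF
      by_cases hac : a = c
      · have hcb : ¬ (c = b) := fun h => hab (hac.trans h)
        simp [hab, hac, hcb, parity_simps]
        decide
      · simp [hab, hac, parity_simps]
    rw [Finset.prod_eq_zero (Finset.mem_univ a) (muF_odd hodd)]
    by_cases hac : a = c <;> by_cases hbc : b = c <;> simp_all
  · by_cases hac : a = c <;> by_cases hbd : b = d
    · subst hac; subst hbd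
      have hone : ∀ i ∈ Finset.univ, muF (multF a b a b i) = 1 := by
        intro i _
        by_cases hia : i = a
        · subst hia; simp [multF, hab, muF]
        · by_cases hib : i = b
          · subst hib; simp [multF, hia, muF]
          · simp [multF, hia, hib, muF]
      rw [Finset.prod_eq_one hone]
      have h2 : ¬ (b = a) := fun h => hab h.symm
      simp [hab, h2]
    · subst hac
      have hodd : Odd (multF a b a d b) := by
        unfold multF
        have h1 : ¬ (b = a) := fun h => hab h.symm
        simp [h1, hbd, parity_simps]
      rw [Finset.prod_eq_zero (Finset.mem_univ b) (muF_odd hodd)]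
      by_cases had : a = d <;> by_cases hbc : b = a <;> simp_all
    · subst hbd
      have hodd : Odd (multF a b c b a) := by
        unfold multF
        have h1 : ¬ (a = b) := hab
        simp [h1, hac, parity_simps]
      rw [Finset.prod_eq_zero (Finset.mem_univ a) (muF_odd hodd)]
      by_cases had : a = b <;> simp_all
    · by_cases had : a = d <;> by_cases hbc : b = c
      · subst had; subst hbc
        have hone : ∀ i ∈ Finset.univ, muF (multF a b b a i) = 1 := by
          intro i _
          by_cases hia : i = a
          · subst hia; simp [multF, hab, muF]
          · by_cases hib : i = b
            · subst hib; simp [multF, hia, muF]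
            · simp [multF, hia, hib, muF]
        rw [Finset.prod_eq_one hone]
        have h2 : ¬ (b = a) := fun h => hab h.symm
        simp [hab, hcd, h2]
      · subst had
        have hodd : Odd (multF a b c a b) := by
          unfold multF
          have h1 : ¬ (b = a) := fun h => hab h.symm
          simp [h1, hbc, hbd, parity_simps]
        rw [Finset.prod_eq_zero (Finset.mem_univ b) (muF_odd hodd)]
        simp_all
      · subst hbc
        have hodd : Odd (multF a b b d a) := by
          unfold multF
          simp [hab, hac, had, parity_simps]
        rw [Finset.prod_eq_zero (Finset.mem_univ a) (muF_odd hodd)]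
        simp_all
      · have hodd : Odd (multF a b c d a) := by
          unfold multF
          simp [hab, hac, had, parity_simps]
        rw [Finset.prod_eq_zero (Finset.mem_univ a) (muF_odd hodd)]
        simp_all

lemma multF_le {n : ℕ} (a b c d i : Fin n) : multF a b c d i ≤ 4 := by
  unfold multF
  split_ifs <;> norm_num

lemma four_mul_eq_prod {n : ℕ} (x : Fin n → ℝ) (a b c d : Fin n) :
    x a * x b * x c * x d = ∏ i, x i ^ multF a b c d i := by
  unfold multF
  simp_rw [pow_add, Finset.prod_mul_distrib, pow_ite, pow_one, pow_zero,
    Finset.prod_ite_eq', Finset.mem_univ, if_true]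

section Prob
variable {Ω : Type*} [MeasureSpace Ω] [IsProbabilityMeasure (ℙ : Measure Ω)]
  {n : ℕ} {ε : Ω → Fin n → ℝ}
  (hmeas : ∀ i, Measurable fun ω => ε ω i)
  (hindep : iIndepFun (fun i ω => ε ω i) ℙ)
  (hgauss : ∀ i, Measure.map (fun ω => ε ω i) ℙ = gaussianReal 0 1)

include hmeas hgauss in
lemma eps_pow_integrable (i : Fin n) (k : ℕ) :
    Integrable (fun ω => ε ω i ^ k) ℙ := by
  have h := (integrable_pow_gauss k)
  rw [← hgauss i] at h
  have := (integrable_map_measure (f := fun ω => ε ω i) (g := fun x => x ^ k)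
    (by fun_prop) (hmeas i).aemeasurable).1 h
  exact this

include hmeas hgauss in
lemma eps_pow_integral (i : Fin n) (k : ℕ) (hk : k ≤ 4) :
    ∫ ω, ε ω i ^ k ∂ℙ = muF k := by
  have h : ∫ x, x ^ k ∂(Measure.map (fun ω => ε ω i) ℙ) = muF k := by
    rw [hgauss i]; exact gauss_moment k hk
  rw [integral_map (hmeas i).aemeasurable (by fun_prop)] at h
  exact h

include hmeas hindep hgauss in
lemma eps_four_integrable (a b c d : Fin n) :
    Integrable (fun ω => ε ω a * ε ω b * ε ω c * ε ω d) ℙ := by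
  have hg : iIndepFun
      (fun i => fun ω => ε ω i ^ multF a b c d i) ℙ := by
    have := hindep.comp (fun i (x : ℝ) => x ^ multF a b c d i) (fun i => by fun_prop)
    exact this
  have h := indep_integral_prod hg (fun i => by fun_prop)
    (fun i => eps_pow_integrable hmeas hgauss i _) Finset.univ
  have he : (fun ω => ε ω a * ε ω b * ε ω c * ε ω d)
      = (∏ i, fun ω => ε ω i ^ multF a b c d i) := by
    funext ω
    rw [four_mul_eq_prod (fun i => ε ω i) a b c d]
    simp [Finset.prod_apply]
  rw [he]; exact h.1

include hmeas hindep hgauss in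
lemma eps_four_integral (a b c d : Fin n) :
    ∫ ω, ε ω a * ε ω b * ε ω c * ε ω d ∂ℙ
      = (if a = b then (1:ℝ) else 0) * (if c = d then 1 else 0)
        + (if a = c then 1 else 0) * (if b = d then 1 else 0)
        + (if a = d then 1 else 0) * (if b = c then 1 else 0) := by
  have hg : iIndepFun
      (fun i => fun ω => ε ω i ^ multF a b c d i) ℙ := by
    have := hindep.comp (fun i (x : ℝ) => x ^ multF a b c d i) (fun i => by fun_prop)
    exact this
  have h := indep_integral_prod hg (fun i => by fun_prop)
    (fun i => eps_pow_integrable hmeas hgauss i _) Finset.univ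
  have he : ∀ ω, ε ω a * ε ω b * ε ω c * ε ω d
      = (∏ i, fun ω => ε ω i ^ multF a b c d i) ω := by
    intro ω
    rw [four_mul_eq_prod (fun i => ε ω i) a b c d]
    simp [Finset.prod_apply]
  calc ∫ ω, ε ω a * ε ω b * ε ω c * ε ω d ∂ℙ
      = ∫ ω, (∏ i, fun ω => ε ω i ^ multF a b c d i) ω ∂ℙ := by
        congr 1; funext ω; exact he ω
    _ = ∏ i, ∫ ω, ε ω i ^ multF a b c d i ∂ℙ := h.2
    _ = ∏ i, muF (multF a b c d i) := by
        refine Finset.prod_congr rfl (fun i _ => ?_)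
        exact eps_pow_integral hmeas hgauss i _ (multF_le a b c d i)
    _ = _ := wick_prod a b c d

end Prob

lemma specNorm_nonneg {n : ℕ} (A : Matrix (Fin n) (Fin n) ℝ) : 0 ≤ specNorm A :=
  norm_nonneg _

lemma specNorm_transpose {n : ℕ} (A : Matrix (Fin n) (Fin n) ℝ) :
    specNorm Aᵀ = specNorm A := by
  unfold specNorm
  have hstar : Aᵀ = star A := by
    rw [Matrix.star_eq_conjTranspose]
    ext i j
    simp [Matrix.conjTranspose_apply]
  rw [hstar, map_star, ContinuousLinearMap.star_eq_adjoint]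
  exact LinearIsometryEquiv.norm_map _ _

lemma norm_symm_sq {n : ℕ} (v : Fin n → ℝ) :
    ‖(WithLp.equiv 2 (Fin n → ℝ)).symm v‖ ^ 2 = ∑ i, v i ^ 2 := by
  rw [EuclideanSpace.norm_eq, Real.sq_sqrt (by positivity)]
  refine Finset.sum_congr rfl fun i _ => ?_
  rw [WithLp.equiv_symm_apply, WithLp.ofLp_toLp, Real.norm_eq_abs, sq_abs]

lemma mulVec_norm_le {n : ℕ} (A : Matrix (Fin n) (Fin n) ℝ) (v : Fin n → ℝ) :
    ∑ i, (A.mulVec v i) ^ 2 ≤ specNorm A ^ 2 * ∑ i, v i ^ 2 := by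
  have h1 : ‖toEuclideanCLM (𝕜 := ℝ) A ((WithLp.equiv 2 (Fin n → ℝ)).symm v)‖
      ≤ specNorm A * ‖(WithLp.equiv 2 (Fin n → ℝ)).symm v‖ :=
    (toEuclideanCLM (𝕜 := ℝ) A).le_opNorm _
  have h2 : toEuclideanCLM (𝕜 := ℝ) A ((WithLp.equiv 2 (Fin n → ℝ)).symm v)
      = (WithLp.equiv 2 (Fin n → ℝ)).symm (A.mulVec v) := by
    exact Matrix.toEuclideanCLM_toLp A v
  rw [h2] at h1
  have h3 := mul_self_le_mul_self (norm_nonneg _) h1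
  calc ∑ i, (A.mulVec v i) ^ 2
      = ‖(WithLp.equiv 2 (Fin n → ℝ)).symm (A.mulVec v)‖ ^ 2 := (norm_symm_sq _).symm
    _ ≤ (specNorm A * ‖(WithLp.equiv 2 (Fin n → ℝ)).symm v‖)^2 := by
        rw [sq, sq]; exact h3
    _ = specNorm A ^ 2 * ∑ i, v i ^ 2 := by
        rw [mul_pow, norm_symm_sq]

-- key spectral bound
lemma sum_sq_le_trace {n : ℕ} (P : Matrix (Fin n) (Fin n) ℝ) :
    ∑ a, ∑ b, ((Pᵀ * P) a b) ^ 2 ≤ specNorm P ^ 2 * (Pᵀ * P).trace := by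
  have hsym : ∀ a b, (Pᵀ * P) a b = (Pᵀ * P) b a := by
    intro a b
    simp only [Matrix.mul_apply, Matrix.transpose_apply]
    exact Finset.sum_congr rfl fun i _ => mul_comm _ _
  have key : ∀ a, ∑ b, ((Pᵀ * P) a b) ^ 2 ≤ specNorm P ^ 2 * (Pᵀ * P) a a := by
    intro a
    have hQcol : ∀ b, (Pᵀ * P).mulVec (Pi.single a 1) b = (Pᵀ * P) a b := by
      intro b
      rw [Matrix.mulVec_single]
      simp [hsym a b]
    have hPcol : ∀ i, P.mulVec (Pi.single a 1) i = P i a := by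
      intro i; rw [Matrix.mulVec_single]; simp
    have hQaa : (Pᵀ * P) a a = ∑ i, (P.mulVec (Pi.single a 1) i) ^ 2 := by
      simp only [Matrix.mul_apply, Matrix.transpose_apply]
      refine Finset.sum_congr rfl fun i _ => ?_
      rw [hPcol i, sq]
    calc ∑ b, ((Pᵀ * P) a b) ^ 2
        = ∑ b, ((Pᵀ * P).mulVec (Pi.single a 1) b) ^ 2 := by
          refine Finset.sum_congr rfl fun b _ => by rw [hQcol b]
      _ = ∑ b, (Pᵀ.mulVec (P.mulVec (Pi.single a 1)) b) ^ 2 := by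
          rw [Matrix.mulVec_mulVec]
      _ ≤ specNorm Pᵀ ^ 2 * ∑ i, (P.mulVec (Pi.single a 1) i) ^ 2 :=
          mulVec_norm_le Pᵀ _
      _ = specNorm P ^ 2 * (Pᵀ * P) a a := by
          rw [specNorm_transpose, hQaa]
  calc ∑ a, ∑ b, ((Pᵀ * P) a b) ^ 2 ≤ ∑ a, specNorm P ^ 2 * (Pᵀ * P) a a :=
        Finset.sum_le_sum fun a _ => key a
    _ = specNorm P ^ 2 * (Pᵀ * P).trace := by
        rw [← Finset.mul_sum, Matrix.trace]
        rfl

lemma trace_nonneg' {n : ℕ} (P : Matrix (Fin n) (Fin n) ℝ) : 0 ≤ (Pᵀ * P).trace := by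
  rw [Matrix.trace]
  refine Finset.sum_nonneg fun a _ => ?_
  simp only [Matrix.diag_apply, Matrix.mul_apply, Matrix.transpose_apply]
  exact Finset.sum_nonneg fun i _ => mul_self_nonneg _

lemma expand_sq {n : ℕ} (P : Matrix (Fin n) (Fin n) ℝ) (x : Fin n → ℝ) :
    ∑ i, (P.mulVec x i) ^ 2
      = ∑ p : Fin n × Fin n, (Pᵀ * P) p.1 p.2 * (x p.1 * x p.2) := by
  rw [Fintype.sum_prod_type]
  simp only [Matrix.mulVec, dotProduct, Matrix.mul_apply, Matrix.transpose_apply]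
  calc ∑ i, (∑ a, P i a * x a) ^ 2
      = ∑ i, ∑ a, ∑ b, (P i a * x a) * (P i b * x b) := by
        refine Finset.sum_congr rfl fun i _ => ?_
        rw [sq, Finset.sum_mul_sum]
    _ = ∑ a, ∑ b, ∑ i, (P i a * x a) * (P i b * x b) := by
        rw [Finset.sum_comm]
        exact Finset.sum_congr rfl fun a _ => Finset.sum_comm
    _ = ∑ a, ∑ b, (∑ i, P i a * P i b) * (x a * x b) := by
        refine Finset.sum_congr rfl fun a _ => Finset.sum_congr rfl fun b _ => ?_
        rw [Finset.sum_mul]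
        exact Finset.sum_congr rfl fun i _ => by ring

/-- For a standard Gaussian vector `ε`, `E[‖Pε‖ₙ⁴]^{1/2} ≤ (Tr(PᵀP) + ρ²(P))/n`. -/
theorem fourth_moment_bound {Ω : Type*} [MeasureSpace Ω]
    [IsProbabilityMeasure (ℙ : Measure Ω)]
    (n : ℕ) (hn : 0 < n) (P : Matrix (Fin n) (Fin n) ℝ)
    (ε : Ω → Fin n → ℝ)
    (hmeas : ∀ i, Measurable fun ω => ε ω i)
    (hindep : iIndepFun (fun i ω => ε ω i) ℙ)
    (hgauss : ∀ i, Measure.map (fun ω => ε ω i) ℙ = gaussianReal 0 1) :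
    Real.sqrt (∫ ω, ((n : ℝ)⁻¹ * ∑ i, (P.mulVec (ε ω) i) ^ 2) ^ 2)
      ≤ ((Pᵀ * P).trace + specNorm P ^ 2) / n := by
  classical
  set Q : Matrix (Fin n) (Fin n) ℝ := Pᵀ * P with hQ
  set S : Ω → ℝ := fun ω => ∑ p : Fin n × Fin n, Q p.1 p.2 * (ε ω p.1 * ε ω p.2) with hS
  -- the per-pair integrand
  set F : (Fin n × Fin n) → (Fin n × Fin n) → Ω → ℝ := fun p q ω =>
    (Q p.1 p.2 * Q q.1 q.2) * (ε ω p.1 * ε ω p.2 * ε ω q.1 * ε ω q.2) with hF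
  have hFint : ∀ p q, Integrable (F p q) ℙ := fun p q =>
    (eps_four_integrable hmeas hindep hgauss p.1 p.2 q.1 q.2).const_mul _
  have hS2 : ∀ ω, (S ω) ^ 2 = ∑ p : Fin n × Fin n, ∑ q : Fin n × Fin n, F p q ω := by
    intro ω
    rw [sq, hS, Finset.sum_mul_sum]
    exact Finset.sum_congr rfl fun p _ => Finset.sum_congr rfl fun q _ => by rw [hF]; ring
  -- value of each integral
  have hFval : ∀ p q : Fin n × Fin n, ∫ ω, F p q ω ∂ℙ
      = (Q p.1 p.2 * Q q.1 q.2) *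
        ((if p.1 = p.2 then (1:ℝ) else 0) * (if q.1 = q.2 then 1 else 0)
          + (if p.1 = q.1 then 1 else 0) * (if p.2 = q.2 then 1 else 0)
          + (if p.1 = q.2 then 1 else 0) * (if p.2 = q.1 then 1 else 0)) := by
    intro p q
    rw [hF]
    simp only []
    rw [MeasureTheory.integral_const_mul, eps_four_integral hmeas hindep hgauss]
  -- compute the integral of S²
  have hIS : ∫ ω, (S ω) ^ 2 ∂ℙ = Q.trace ^ 2 + 2 * ∑ a, ∑ b, (Q a b) ^ 2 := by
    have h1 : ∫ ω, (S ω) ^ 2 ∂ℙ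
        = ∑ p : Fin n × Fin n, ∑ q : Fin n × Fin n, ∫ ω, F p q ω ∂ℙ := by
      simp_rw [hS2]
      rw [integral_finset_sum _ (fun p _ => integrable_finset_sum _ (fun q _ => hFint p q))]
      exact Finset.sum_congr rfl fun p _ =>
        integral_finset_sum _ (fun q _ => hFint p q)
    rw [h1]
    simp_rw [hFval]
    -- split into three sums
    have hsplit : ∀ p q : Fin n × Fin n,
        (Q p.1 p.2 * Q q.1 q.2) *
          ((if p.1 = p.2 then (1:ℝ) else 0) * (if q.1 = q.2 then 1 else 0)
            + (if p.1 = q.1 then 1 else 0) * (if p.2 = q.2 then 1 else 0)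
            + (if p.1 = q.2 then 1 else 0) * (if p.2 = q.1 then 1 else 0))
        = (Q p.1 p.2 * (if p.1 = p.2 then (1:ℝ) else 0)) * (Q q.1 q.2 * (if q.1 = q.2 then 1 else 0))
          + (Q p.1 p.2 * Q q.1 q.2) * ((if p.1 = q.1 then 1 else 0) * (if p.2 = q.2 then 1 else 0))
          + (Q p.1 p.2 * Q q.1 q.2) * ((if p.1 = q.2 then 1 else 0) * (if p.2 = q.1 then 1 else 0)) := by
      intro p q; ring
    simp_rw [hsplit, Finset.sum_add_distrib]
    have hdiag : ∑ p : Fin n × Fin n, Q p.1 p.2 * (if p.1 = p.2 then (1:ℝ) else 0) = Q.trace := by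
      rw [Fintype.sum_prod_type]
      simp [Matrix.trace, mul_ite, mul_one, mul_zero, Finset.sum_ite_eq]
    have hT1 : ∑ p : Fin n × Fin n, ∑ q : Fin n × Fin n,
        (Q p.1 p.2 * (if p.1 = p.2 then (1:ℝ) else 0)) * (Q q.1 q.2 * (if q.1 = q.2 then 1 else 0))
        = Q.trace ^ 2 := by
      rw [← Finset.sum_mul_sum, hdiag, sq]
    have hT2 : ∑ p : Fin n × Fin n, ∑ q : Fin n × Fin n,
        (Q p.1 p.2 * Q q.1 q.2) * ((if p.1 = q.1 then (1:ℝ) else 0) * (if p.2 = q.2 then 1 else 0))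
        = ∑ a, ∑ b, (Q a b) ^ 2 := by
      have hinner : ∀ p : Fin n × Fin n, ∑ q : Fin n × Fin n,
          (Q p.1 p.2 * Q q.1 q.2) * ((if p.1 = q.1 then (1:ℝ) else 0) * (if p.2 = q.2 then 1 else 0))
          = Q p.1 p.2 ^ 2 := by
        intro p
        rw [Fintype.sum_prod_type]
        simp [mul_ite, mul_one, mul_zero, Finset.sum_ite_eq, sq]
      simp_rw [hinner]
      rw [Fintype.sum_prod_type]
    have hT3 : ∑ p : Fin n × Fin n, ∑ q : Fin n × Fin n,
        (Q p.1 p.2 * Q q.1 q.2) * ((if p.1 = q.2 then (1:ℝ) else 0) * (if p.2 = q.1 then 1 else 0))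
        = ∑ a, ∑ b, (Q a b) ^ 2 := by
      have hsym : ∀ a b, Q b a = Q a b := by
        intro a b
        rw [hQ]
        simp only [Matrix.mul_apply, Matrix.transpose_apply]
        exact Finset.sum_congr rfl fun i _ => mul_comm _ _
      have hinner : ∀ p : Fin n × Fin n, ∑ q : Fin n × Fin n,
          (Q p.1 p.2 * Q q.1 q.2) * ((if p.1 = q.2 then (1:ℝ) else 0) * (if p.2 = q.1 then 1 else 0))
          = Q p.1 p.2 ^ 2 := by
        intro p
        rw [Fintype.sum_prod_type]
        simp [mul_ite, mul_one, mul_zero, Finset.sum_ite_eq, sq, hsym]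
      simp_rw [hinner]
      rw [Fintype.sum_prod_type]
    rw [hT1, hT2, hT3]
    ring
  -- rewrite the LHS integrand
  have hpt : (fun ω => ((n : ℝ)⁻¹ * ∑ i, (P.mulVec (ε ω) i) ^ 2) ^ 2)
      = fun ω => ((n:ℝ)⁻¹)^2 * (S ω) ^ 2 := by
    funext ω
    rw [expand_sq P (ε ω), mul_pow]
  rw [hpt, MeasureTheory.integral_const_mul, hIS]
  -- final numeric bound
  have hρ : (0:ℝ) ≤ specNorm P ^ 2 := sq_nonneg _
  have htr := trace_nonneg' P
  have hkey : Q.trace ^ 2 + 2 * ∑ a, ∑ b, (Q a b) ^ 2 ≤ (Q.trace + specNorm P ^ 2) ^ 2 := by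
    have h2 := sum_sq_le_trace P
    nlinarith [h2]
  have hn' : (0:ℝ) ≤ (n:ℝ)⁻¹ := by positivity
  calc Real.sqrt (((n:ℝ)⁻¹)^2 * (Q.trace ^ 2 + 2 * ∑ a, ∑ b, (Q a b) ^ 2))
      ≤ Real.sqrt (((n:ℝ)⁻¹)^2 * (Q.trace + specNorm P ^ 2) ^ 2) := by
        refine Real.sqrt_le_sqrt ?_
        exact mul_le_mul_of_nonneg_left hkey (by positivity)
    _ = (n:ℝ)⁻¹ * (Q.trace + specNorm P ^ 2) := by
        rw [← mul_pow, Real.sqrt_sq (by positivity)]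
    _ = (Q.trace + specNorm P ^ 2) / n := by
        rw [div_eq_mul_inv, mul_comm]
end
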